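/- Suppose (a,b) and (ã,b̃) are two solutions on an interval of the system da/dt = (Pa/t)(b - 1/P), db/dt = (P/(2t))(1-b²) - (PQ/2)(1-a²) - Qb with P(t) = √6√(2t²+2)/√(2t²+3), Q(t) = t/(t²+1), and at some time t* > 0 we have a(t*) > ã(t*) > 0 and b(t*) > b̃(t*). Then a(t) > ã(t) and b(t) > b̃(t) for all t ≥ t* for which both solutions exist. -/

import Mathlib

/-- Metric coefficient `P(t) = √6·√(2t²+2)/√(2t²+3)`. -/
noncomputable def Pfun (t : ℝ) : ℝ := Real.sqrt 6 * Real.sqrt (2 * t ^ 2 + 2) / Real.sqrt (2 * t ^ 2 + 3)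

/-- Metric coefficient `Q(t) = t/(t²+1)`. -/
noncomputable def Qfun (t : ℝ) : ℝ := t / (t ^ 2 + 1)

/-- `(a,b)` solves the invariant Spin(7) instanton system on the set `s`. -/
def SolvesSpin7 (a b : ℝ → ℝ) (s : Set ℝ) : Prop :=
  ∀ t ∈ s,
    HasDerivAt a (Pfun t * a t / t * (b t - 1 / Pfun t)) t ∧
    HasDerivAt b
      (Pfun t / (2 * t) * (1 - (b t) ^ 2) - Pfun t * Qfun t / 2 * (1 - (a t) ^ 2) - Qfun t * b t) t

lemma Pfun_pos (t : ℝ) : 0 < Pfun t := by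
  unfold Pfun
  have h1 : (0:ℝ) < Real.sqrt 6 := Real.sqrt_pos.2 (by norm_num)
  have h2 : (0:ℝ) < Real.sqrt (2 * t ^ 2 + 2) := Real.sqrt_pos.2 (by positivity)
  have h3 : (0:ℝ) < Real.sqrt (2 * t ^ 2 + 3) := Real.sqrt_pos.2 (by positivity)
  positivity

lemma Pfun_continuous : Continuous Pfun := by
  unfold Pfun
  apply Continuous.div
  · exact continuous_const.mul (Real.continuous_sqrt.comp (by continuity))
  · exact Real.continuous_sqrt.comp (by continuity)
  · intro t; exact ne_of_gt (Real.sqrt_pos.2 (by positivity))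

lemma Qfun_continuous : Continuous Qfun := by
  unfold Qfun
  exact continuous_id.div (by continuity) (fun t => by positivity)

lemma Qfun_nonneg {t : ℝ} (ht : 0 ≤ t) : 0 ≤ Qfun t := by
  unfold Qfun; positivity

/-- Exponential Gronwall-type positivity lemma. -/
lemma exp_gronwall {g g' : ℝ → ℝ} {M t0 t1 : ℝ} (h01 : t0 < t1)
    (hd : ∀ t ∈ Set.Icc t0 t1, HasDerivAt g (g' t) t)
    (key : ∀ t ∈ Set.Ioo t0 t1, -(M * g t) ≤ g' t)
    (h0 : 0 < g t0) : 0 < g t1 := by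
  set h : ℝ → ℝ := fun t => g t * Real.exp (M * t) with hh
  have hdh : ∀ t ∈ Set.Icc t0 t1,
      HasDerivAt h (g' t * Real.exp (M * t) + g t * (Real.exp (M * t) * M)) t := by
    intro t ht
    have he : HasDerivAt (fun t => Real.exp (M * t)) (Real.exp (M * t) * M) t := by
      simpa using ((hasDerivAt_id t).const_mul M).exp
    exact (hd t ht).mul he
  have hmono : MonotoneOn h (Set.Icc t0 t1) := by
    apply monotoneOn_of_deriv_nonneg (convex_Icc _ _)
    · exact fun t ht => (hdh t ht).continuousAt.continuousWithinAt
    · intro t ht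
      rw [interior_Icc] at ht
      exact ((hdh t (Set.Ioo_subset_Icc_self ht)).differentiableAt).differentiableWithinAt
    · intro t ht
      rw [interior_Icc] at ht
      rw [(hdh t (Set.Ioo_subset_Icc_self ht)).deriv]
      have hk := key t ht
      have hexp : 0 < Real.exp (M * t) := Real.exp_pos _
      nlinarith
  have hle : h t0 ≤ h t1 :=
    hmono (Set.left_mem_Icc.2 h01.le) (Set.right_mem_Icc.2 h01.le) h01.le
  have h0' : 0 < h t0 := by
    have := Real.exp_pos (M * t0); simp only [hh]; positivity
  have h1' : 0 < h t1 := lt_of_lt_of_le h0' hle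
  have hexp : 0 < Real.exp (M * t1) := Real.exp_pos _
  by_contra hc
  push_neg at hc
  have : h t1 ≤ 0 := by
    simp only [hh]
    exact mul_nonpos_of_nonpos_of_nonneg hc hexp.le
  linarith

lemma u_eq (P t x x' y y' : ℝ) (hP : P ≠ 0) (ht : t ≠ 0) :
    P * x / t * (y - 1 / P) - P * x' / t * (y' - 1 / P)
      = ((P * y' - 1) / t) * (x - x') + (P * x / t) * (y - y') := by
  field_simp
  ring

lemma v_eq (P Q t x x' y y' : ℝ) (ht : t ≠ 0) :
    (P / (2 * t) * (1 - y ^ 2) - P * Q / 2 * (1 - x ^ 2) - Q * y)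
      - (P / (2 * t) * (1 - y' ^ 2) - P * Q / 2 * (1 - x' ^ 2) - Q * y')
      = (P * Q / 2 * (x + x')) * (x - x') + (-(P / (2 * t)) * (y + y') - Q) * (y - y') := by
  field_simp
  ring

lemma a'_eq (P t x y : ℝ) (hP : P ≠ 0) (ht : t ≠ 0) :
    P * x / t * (y - 1 / P) = ((P * y - 1) / t) * x := by
  field_simp

/-- Comparison principle: if one solution lies strictly above another (componentwise) at some time
`t* > 0`, with the smaller `a`-component positive there, the inequalities persist for all later
times at which both solutions exist. -/
theorem spin7_comparison (a b a' b' : ℝ → ℝ) (tstar T : ℝ)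
    (htstar : 0 < tstar) (hT : tstar ≤ T)
    (hsol : SolvesSpin7 a b (Set.Icc tstar T))
    (hsol' : SolvesSpin7 a' b' (Set.Icc tstar T))
    (ha : a' tstar < a tstar) (ha'pos : 0 < a' tstar) (hb : b' tstar < b tstar) :
    ∀ t ∈ Set.Icc tstar T, a' t < a t ∧ b' t < b t := by
  set s : Set ℝ := Set.Icc tstar T with hs
  have hspos : ∀ t ∈ s, 0 < t := fun t ht => lt_of_lt_of_le htstar ht.1
  -- continuity of the solutions on s
  have hca : ContinuousOn a s := fun t ht => ((hsol t ht).1.continuousAt).continuousWithinAt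
  have hcb : ContinuousOn b s := fun t ht => ((hsol t ht).2.continuousAt).continuousWithinAt
  have hca' : ContinuousOn a' s := fun t ht => ((hsol' t ht).1.continuousAt).continuousWithinAt
  have hcb' : ContinuousOn b' s := fun t ht => ((hsol' t ht).2.continuousAt).continuousWithinAt
  -- coefficient functions
  set A : ℝ → ℝ := fun t => (Pfun t * b' t - 1) / t with hA
  set D : ℝ → ℝ := fun t => -(Pfun t / (2 * t)) * (b t + b' t) - Qfun t with hD
  have hAc : ContinuousOn A s := by
    apply ContinuousOn.div
    · exact ((Pfun_continuous.continuousOn).mul hcb').sub continuousOn_const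
    · exact continuousOn_id
    · exact fun t ht => ne_of_gt (hspos t ht)
  have hDc : ContinuousOn D s := by
    apply ContinuousOn.sub
    · apply ContinuousOn.mul
      · apply ContinuousOn.neg
        apply ContinuousOn.div (Pfun_continuous.continuousOn) (by fun_prop)
        exact fun t ht => by have := hspos t ht; positivity
      · exact hcb.add hcb'
    · exact Qfun_continuous.continuousOn
  obtain ⟨MA, hMA⟩ := (isCompact_Icc (a := tstar) (b := T)).exists_bound_of_continuousOn hAc
  obtain ⟨MD, hMD⟩ := (isCompact_Icc (a := tstar) (b := T)).exists_bound_of_continuousOn hDc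
  set M : ℝ := max MA MD with hM
  have hAM : ∀ t ∈ s, -M ≤ A t := by
    intro t ht
    have := hMA t ht
    have h1 : |A t| ≤ MA := this
    have := abs_le.1 h1
    have : -MA ≤ A t := this.1
    have : MA ≤ M := le_max_left _ _
    linarith [(abs_le.1 h1).1]
  have hDM : ∀ t ∈ s, -M ≤ D t := by
    intro t ht
    have h1 : |D t| ≤ MD := hMD t ht
    have := le_max_right MA MD
    linarith [(abs_le.1 h1).1]
  -- the positivity witness function
  set g : ℝ → ℝ := fun t => min (a' t) (min (a t - a' t) (b t - b' t)) with hg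
  have hgc : ContinuousOn g s := fun t ht =>
    Filter.Tendsto.min (hca' t ht)
      (Filter.Tendsto.min ((hca t ht).sub (hca' t ht)) ((hcb t ht).sub (hcb' t ht)))
  suffices hgood : ∀ t ∈ s, 0 < g t by
    intro t ht
    have h := hgood t ht
    simp only [hg, lt_min_iff] at h
    exact ⟨by linarith [h.2.1], by linarith [h.2.2]⟩
  by_contra hbadne
  push_neg at hbadne
  obtain ⟨t₀, ht₀s, ht₀⟩ := hbadne
  set Bad : Set ℝ := s ∩ g ⁻¹' Set.Iic 0 with hBad
  have hBadne : Bad.Nonempty := ⟨t₀, ht₀s, ht₀⟩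
  have hBadclosed : IsClosed Bad := hgc.preimage_isClosed_of_isClosed isClosed_Icc isClosed_Iic
  have hBadbdd : BddBelow Bad := ⟨tstar, fun t ht => ht.1.1⟩
  set τ : ℝ := sInf Bad with hτ
  have hτBad : τ ∈ Bad := hBadclosed.csInf_mem hBadne hBadbdd
  have hτs : τ ∈ s := hτBad.1
  have hgstar : 0 < g tstar := by
    simp only [hg, lt_min_iff]
    exact ⟨ha'pos, by linarith, by linarith⟩
  have hτgt : tstar < τ := by
    rcases lt_or_eq_of_le hτs.1 with h | h
    · exact h
    · exfalso; rw [← h] at hτBad; have := hτBad.2; simp at this; linarith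
  -- before τ everything is strictly positive
  have hpre : ∀ t, tstar ≤ t → t < τ → 0 < g t := by
    intro t h1 h2
    by_contra hc
    push_neg at hc
    have hts : t ∈ s := ⟨h1, le_trans h2.le hτs.2⟩
    have : t ∈ Bad := ⟨hts, hc⟩
    have := csInf_le hBadbdd this
    linarith
  have hsub : Set.Icc tstar τ ⊆ s := Set.Icc_subset_Icc le_rfl hτs.2
  have hIoo : ∀ t ∈ Set.Ioo tstar τ, 0 < a' t ∧ 0 < a t - a' t ∧ 0 < b t - b' t := by
    intro t ht
    have := hpre t ht.1.le ht.2
    simp only [hg, lt_min_iff] at this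
    exact ⟨this.1, this.2.1, this.2.2⟩
  -- Step 1: a' τ > 0
  have ha'τ : 0 < a' τ := by
    apply exp_gronwall (g := a')
      (g' := fun t => Pfun t * a' t / t * (b' t - 1 / Pfun t)) (M := M) hτgt
    · exact fun t ht => (hsol' t (hsub ht)).1
    · intro t ht
      have hts := hsub (Set.Ioo_subset_Icc_self ht)
      have htpos := hspos t hts
      have heq := a'_eq (Pfun t) t (a' t) (b' t) (ne_of_gt (Pfun_pos t)) (ne_of_gt htpos)
      rw [heq]
      have h1 : -M ≤ (Pfun t * b' t - 1) / t := hAM t hts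
      have h2 := (hIoo t ht).1
      nlinarith [mul_le_mul_of_nonneg_right h1 h2.le]
    · exact ha'pos
  -- Step 2: a τ - a' τ > 0
  have huτ : 0 < a τ - a' τ := by
    apply exp_gronwall (g := fun t => a t - a' t)
      (g' := fun t => Pfun t * a t / t * (b t - 1 / Pfun t)
        - Pfun t * a' t / t * (b' t - 1 / Pfun t)) (M := M) hτgt
    · exact fun t ht => ((hsol t (hsub ht)).1).sub ((hsol' t (hsub ht)).1)
    · intro t ht
      have hts := hsub (Set.Ioo_subset_Icc_self ht)
      have htpos := hspos t hts
      have heq := u_eq (Pfun t) t (a t) (a' t) (b t) (b' t)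
        (ne_of_gt (Pfun_pos t)) (ne_of_gt htpos)
      rw [heq]
      obtain ⟨h1, h2, h3⟩ := hIoo t ht
      have hAt : -M ≤ (Pfun t * b' t - 1) / t := hAM t hts
      have hPt := Pfun_pos t
      have hat : 0 < a t := by linarith
      have hB : 0 ≤ Pfun t * a t / t := by positivity
      nlinarith [mul_le_mul_of_nonneg_right hAt h2.le, mul_nonneg hB h3.le]
    · linarith
  -- Step 3: b τ - b' τ > 0
  have hvτ : 0 < b τ - b' τ := by
    apply exp_gronwall (g := fun t => b t - b' t)
      (g' := fun t =>
        (Pfun t / (2 * t) * (1 - (b t) ^ 2) - Pfun t * Qfun t / 2 * (1 - (a t) ^ 2) - Qfun t * b t)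
        - (Pfun t / (2 * t) * (1 - (b' t) ^ 2) - Pfun t * Qfun t / 2 * (1 - (a' t) ^ 2)
            - Qfun t * b' t)) (M := M) hτgt
    · exact fun t ht => ((hsol t (hsub ht)).2).sub ((hsol' t (hsub ht)).2)
    · intro t ht
      have hts := hsub (Set.Ioo_subset_Icc_self ht)
      have htpos := hspos t hts
      have heq := v_eq (Pfun t) (Qfun t) t (a t) (a' t) (b t) (b' t) (ne_of_gt htpos)
      rw [heq]
      obtain ⟨h1, h2, h3⟩ := hIoo t ht
      have hDt : -M ≤ -(Pfun t / (2 * t)) * (b t + b' t) - Qfun t := hDM t hts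
      have hPt := Pfun_pos t
      have hQt := Qfun_nonneg htpos.le
      have hat : 0 < a t := by linarith
      have hC : 0 ≤ Pfun t * Qfun t / 2 * (a t + a' t) := by positivity
      nlinarith [mul_le_mul_of_nonneg_right hDt h3.le, mul_nonneg hC h2.le]
    · linarith
  -- contradiction with τ ∈ Bad
  have : g τ ≤ 0 := hτBad.2
  simp only [hg, lt_min_iff] at this ha'τ huτ hvτ ⊢
  have : 0 < g τ := by simp only [hg, lt_min_iff]; exact ⟨ha'τ, huτ, hvτ⟩
  linarith [hτBad.2, this]
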